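/- arXiv:1912.12556 — 4 statements merged into one kernel-verified Lean document; each statement's English description precedes it below -/
import Mathlib

section
/- Let 𝔤 be a finite-dimensional Lie algebra over a finite field F_q, equipped with a nondegenerate invariant bilinear form ⟨·,·⟩ (invariant means ⟨[X,Y],Z⟩ = ⟨X,[Y,Z]⟩ for all X,Y,Z ∈ 𝔤). Then the number of solutions satisfies #{(X_1,Y_1,X_2,Y_2) ∈ 𝔤⁴ : [X_1,Y_1] + [X_2,Y_2] = 0} = |𝔤| · Σ_{Z ∈ 𝔤} |C_𝔤(Z)|², where C_𝔤(Z) = {W ∈ 𝔤 : [Z,W] = 0} is the centralizer of Z and |·| denotes cardinality. -/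
/-!
Statement 6: For a finite-dimensional Lie algebra `𝔤` over a finite field `F_q` with a
nondegenerate invariant bilinear form,
`#{(X₁,Y₁,X₂,Y₂) ∈ 𝔤⁴ : [X₁,Y₁] + [X₂,Y₂] = 0} = |𝔤| · ∑_{Z ∈ 𝔤} |C_𝔤(Z)|²`,
where `C_𝔤(Z) = {W ∈ 𝔤 : [Z,W] = 0}` is the centralizer of `Z`.
-/

open scoped BigOperators
open scoped Classical

/-- Orthogonality: the sum of a nontrivial additive character composed with a linear
functional over a finite vector space. -/
lemma sum_addChar_comp_linear {F : Type} [Field F] {K : Type*} [CommRing K] [IsDomain K]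
    {L : Type} [AddCommGroup L] [Module F L] [Fintype L]
    (ψ : AddChar F K) (hψ : ψ ≠ 1) (f : L →ₗ[F] F) :
    ∑ y : L, ψ (f y) = if f = 0 then (Fintype.card L : K) else 0 := by
  by_cases hf : f = 0
  · simp [hf]
  · simp only [hf, if_false]
    obtain ⟨t, ht⟩ := AddChar.ne_one_iff.1 hψ
    obtain ⟨x, hx⟩ : ∃ x, f x ≠ 0 := by
      by_contra h
      push_neg at h
      exact hf (by ext y; simp [h y])
    have hne : ψ.compAddMonoidHom f.toAddMonoidHom ≠ 1 := by
      rw [AddChar.ne_one_iff]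
      refine ⟨(t * (f x)⁻¹) • x, ?_⟩
      have : f ((t * (f x)⁻¹) • x) = t := by
        rw [map_smul, smul_eq_mul, mul_assoc, inv_mul_cancel₀ hx, mul_one]
      simpa [AddChar.compAddMonoidHom, this] using ht
    have := AddChar.sum_eq_zero_of_ne_one hne
    simpa [AddChar.compAddMonoidHom] using this

theorem commutator_double_convolution_zero_fiber_count :
    ∀ (F : Type) [Field F] [Fintype F]
      (L : Type) [LieRing L] [LieAlgebra F L] [Fintype L]
      (B : L →ₗ[F] L →ₗ[F] F),
      -- nondegeneracy
      (∀ v : L, (∀ w : L, B v w = 0) → v = 0) →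
      (∀ v : L, (∀ w : L, B w v = 0) → v = 0) →
      -- invariance
      (∀ X Y Z : L, B ⁅X, Y⁆ Z = B X ⁅Y, Z⁆) →
      Nat.card {p : L × L × L × L // ⁅p.1, p.2.1⁆ + ⁅p.2.2.1, p.2.2.2⁆ = 0} =
        Nat.card L * ∑ Z : L, (Nat.card {W : L // ⁅Z, W⁆ = 0}) ^ 2 := by
  intro F _ _ L _ _ _ B hnd1 hnd2 hinv
  classical
  -- a nontrivial additive character of F with values in a char-zero field
  have hchar : ringChar ℂ ≠ ringChar F := by
    have hp : (ringChar F).Prime := CharP.char_is_prime F (ringChar F)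
    rw [ringChar.eq_zero]
    exact fun h => hp.ne_zero h.symm
  obtain ⟨n, ψ, hprim⟩ := AddChar.FiniteField.primitiveChar F ℂ hchar
  set K := CyclotomicField n ℂ with hK
  haveI : CharZero K := charZero_of_injective_algebraMap (algebraMap ℂ K).injective
  have hψ : ψ ≠ 1 := by
    intro h
    exact hprim (one_ne_zero) (by rw [AddChar.mulShift_one]; exact h)
  -- notation
  set q : ℕ := Fintype.card L with hq
  set c : L → ℕ := fun Z => Fintype.card {W : L // ⁅Z, W⁆ = 0} with hc
  set N : ℕ := Fintype.card {p : L × L × L × L // ⁅p.1, p.2.1⁆ + ⁅p.2.2.1, p.2.2.2⁆ = 0}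
    with hN
  -- flip nondegeneracy, stated for linear maps
  have flip_eq_zero : ∀ v : L, B.flip v = 0 ↔ v = 0 := by
    intro v
    constructor
    · intro h; exact hnd2 v fun w => by simpa using LinearMap.congr_fun h w
    · rintro rfl; ext w; simp
  have left_eq_zero : ∀ v : L, B v = 0 ↔ v = 0 := by
    intro v
    constructor
    · intro h; exact hnd1 v fun w => by simpa using LinearMap.congr_fun h w
    · rintro rfl; simp
  -- the double-counted character sum, first way
  have key1 : ∑ p : L × L × L × L, ∑ Z : L,
      ψ (B Z (⁅p.1, p.2.1⁆ + ⁅p.2.2.1, p.2.2.2⁆)) = (N : K) * q := by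
    have inner : ∀ v : L, ∑ Z : L, ψ (B Z v) = if v = 0 then (q : K) else 0 := by
      intro v
      have h1 : ∀ Z : L, B Z v = B.flip v Z := fun Z => rfl
      simp_rw [h1]
      rw [sum_addChar_comp_linear ψ hψ (B.flip v)]
      simp [flip_eq_zero v, hq]
    simp_rw [inner]
    rw [Finset.sum_ite, Finset.sum_const, Finset.sum_const, smul_zero, add_zero, nsmul_eq_mul]
    have hcard : (Finset.univ.filter
        (fun p : L × L × L × L => ⁅p.1, p.2.1⁆ + ⁅p.2.2.1, p.2.2.2⁆ = 0)).card = N := by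
      rw [hN, Fintype.card_subtype]
    rw [hcard]
  -- the double-counted character sum, second way
  have key2 : ∑ Z : L, ∑ p : L × L × L × L,
      ψ (B Z (⁅p.1, p.2.1⁆ + ⁅p.2.2.1, p.2.2.2⁆)) = ∑ Z : L, ((q : K) * c Z) ^ 2 := by
    refine Finset.sum_congr rfl fun Z _ => ?_
    have g_eq : ∑ xy : L × L, ψ (B Z ⁅xy.1, xy.2⁆) = (q : K) * c Z := by
      rw [Fintype.sum_prod_type]
      have step : ∀ X : L, ∑ Y : L, ψ (B Z ⁅X, Y⁆) = if ⁅Z, X⁆ = 0 then (q : K) else 0 := by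
        intro X
        have h2 : ∀ Y : L, B Z ⁅X, Y⁆ = B ⁅Z, X⁆ Y := fun Y => (hinv Z X Y).symm
        simp_rw [h2]
        rw [sum_addChar_comp_linear ψ hψ (B ⁅Z, X⁆)]
        simp [left_eq_zero, hq]
      simp_rw [step]
      rw [Finset.sum_ite, Finset.sum_const, Finset.sum_const, smul_zero, add_zero, nsmul_eq_mul]
      have hcard : (Finset.univ.filter (fun x : L => ⁅Z, x⁆ = 0)).card = c Z := by
        simp only [hc]
        rw [Fintype.card_subtype]
      rw [hcard, mul_comm]
    calc ∑ p : L × L × L × L, ψ (B Z (⁅p.1, p.2.1⁆ + ⁅p.2.2.1, p.2.2.2⁆))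
        = ∑ ab : (L × L) × (L × L),
            ψ (B Z ⁅ab.1.1, ab.1.2⁆) * ψ (B Z ⁅ab.2.1, ab.2.2⁆) := by
          apply Fintype.sum_equiv (Equiv.prodAssoc L L (L × L)).symm
          intro p
          simp only [Equiv.prodAssoc_symm_apply]
          rw [← AddChar.map_add_eq_mul, ← map_add]
      _ = (∑ a : L × L, ψ (B Z ⁅a.1, a.2⁆)) * (∑ b : L × L, ψ (B Z ⁅b.1, b.2⁆)) := by
          rw [Finset.sum_mul_sum, Fintype.sum_prod_type]
      _ = ((q : K) * c Z) ^ 2 := by rw [g_eq]; ring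
  have main : (N : K) * q = (q : K) ^ 2 * ∑ Z : L, (c Z : K) ^ 2 := by
    rw [← key1, Finset.sum_comm, key2]
    rw [Finset.mul_sum]
    refine Finset.sum_congr rfl fun Z _ => ?_
    ring
  have hq0 : (q : K) ≠ 0 := by
    have : 0 < q := Fintype.card_pos
    exact_mod_cast Nat.cast_ne_zero.2 this.ne'
  have main2 : (N : K) = (q : K) * ∑ Z : L, (c Z : K) ^ 2 :=
    mul_right_cancel₀ hq0 (by rw [main]; ring)
  have natmain : N = q * ∑ Z : L, (c Z) ^ 2 := by
    have : ((N : ℕ) : K) = ((q * ∑ Z : L, (c Z) ^ 2 : ℕ) : K) := by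
      push_cast
      exact main2.trans (by simp [K])
    exact_mod_cast this
  -- convert Nat.card to Fintype.card
  rw [Nat.card_eq_fintype_card]
  calc Fintype.card {p : L × L × L × L // ⁅p.1, p.2.1⁆ + ⁅p.2.2.1, p.2.2.2⁆ = 0}
      = N := by rw [hN]
    _ = q * ∑ Z : L, (c Z) ^ 2 := natmain
    _ = Nat.card L * ∑ Z : L, (Nat.card {W : L // ⁅Z, W⁆ = 0}) ^ 2 := by
        rw [hq, Nat.card_eq_fintype_card]
        congr 1
        refine Finset.sum_congr rfl fun Z _ => ?_
        rw [hc, Nat.card_eq_fintype_card]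
end

section
/- Let 𝔤 be a finite-dimensional Lie algebra over a finite field F_q, equipped with a nondegenerate invariant bilinear form ⟨·,·⟩ (invariant means ⟨[X,Y],Z⟩ = ⟨X,[Y,Z]⟩ for all X,Y,Z ∈ 𝔤), and let ψ be a nontrivial additive character of F_q (a group homomorphism from (F_q,+) to the nonzero complex numbers that is not identically 1). Then for every Z ∈ 𝔤, Σ_{(X,Y) ∈ 𝔤×𝔤} ψ(⟨Z,[X,Y]⟩) = |𝔤| · |C_𝔤(Z)|, where C_𝔤(Z) = {W ∈ 𝔤 : [Z,W] = 0} is the centralizer of Z. -/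
/-!
Statement 7: For a finite-dimensional Lie algebra `𝔤` over a finite field `F_q` with a
nondegenerate invariant bilinear form `⟨·,·⟩` and a nontrivial additive character
`ψ : F_q → ℂˣ`, for every `Z ∈ 𝔤`,
`∑_{(X,Y) ∈ 𝔤×𝔤} ψ(⟨Z,[X,Y]⟩) = |𝔤| · |C_𝔤(Z)|`,
where `C_𝔤(Z) = {W : [Z,W] = 0}` is the centralizer of `Z`.
-/

open scoped BigOperators

theorem commutator_character_sum :
    ∀ (F : Type) [Field F] [Fintype F]
      (L : Type) [LieRing L] [LieAlgebra F L] [Fintype L]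
      (B : L →ₗ[F] L →ₗ[F] F),
      -- nondegeneracy
      (∀ v : L, (∀ w : L, B v w = 0) → v = 0) →
      (∀ v : L, (∀ w : L, B w v = 0) → v = 0) →
      -- invariance
      (∀ X Y Z : L, B ⁅X, Y⁆ Z = B X ⁅Y, Z⁆) →
      ∀ (ψ : AddChar F ℂ), (∃ a : F, ψ a ≠ 1) →
      ∀ Z : L,
        (∑ X : L, ∑ Y : L, ψ (B Z ⁅X, Y⁆)) =
          (Nat.card L : ℂ) * (Nat.card {W : L // ⁅Z, W⁆ = 0} : ℂ) := by
  intro F _ _ L _ _ _ B hnd₁ _hnd₂ hinv ψ hψ Z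
  classical
  obtain ⟨a, ha⟩ := hψ
  -- rewrite the inner sum using invariance
  have key : ∀ X : L, (∑ Y : L, ψ (B Z ⁅X, Y⁆)) =
      if ⁅Z, X⁆ = 0 then (Fintype.card L : ℂ) else 0 := by
    intro X
    have hrw : ∀ Y : L, B Z ⁅X, Y⁆ = B ⁅Z, X⁆ Y := fun Y => (hinv Z X Y).symm
    simp only [hrw]
    by_cases h : ⁅Z, X⁆ = 0
    · simp [h, Finset.card_univ]
    · -- the character Y ↦ ψ (B ⁅Z,X⁆ Y) is nontrivial, so the sum vanishes
      set v := ⁅Z, X⁆ with hv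
      have hBv : ∃ w : L, B v w ≠ 0 := by
        by_contra hc
        push_neg at hc
        exact h (hnd₁ v hc)
      obtain ⟨w, hw⟩ := hBv
      set χ : AddChar L ℂ := ψ.compAddMonoidHom (B v).toAddMonoidHom with hχ
      have hsum : (∑ Y : L, ψ (B v Y)) = ∑ Y : L, χ Y := by
        simp [hχ]
      rw [hsum, if_neg h]
      rw [AddChar.sum_eq_zero_iff_ne_zero, AddChar.ne_zero_iff]
      refine ⟨(a * (B v w)⁻¹) • w, ?_⟩
      have : B v ((a * (B v w)⁻¹) • w) = a := by
        rw [map_smul, smul_eq_mul]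
        field_simp
      simpa [hχ, this] using ha
  rw [Finset.sum_congr rfl (fun X _ => key X)]
  rw [Finset.sum_ite, Finset.sum_const_zero, Finset.sum_const, add_zero, nsmul_eq_mul,
    Nat.card_eq_fintype_card, Nat.card_eq_fintype_card, Fintype.card_subtype, mul_comm]
end

section
/- Let 𝔤 be a finite-dimensional simple Lie algebra over an algebraically closed field K of characteristic 0, and let w ∈ L_r be a Lie algebra word such that the word map φ_w : 𝔤^r → 𝔤 is not identically zero. Then the K-linear span of the image φ_w(𝔤^r) is all of 𝔤 (in particular, φ_w is a generating morphism). -/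
/-!
Statement 11: (Proposition 4.5 of Glazer–Hendel.) If `𝔤` is a finite-dimensional simple Lie
algebra over a field `K` of characteristic zero and `w ∈ L_r` is a Lie algebra word whose
word map `φ_w : 𝔤^r → 𝔤` is not identically zero, then the `K`-linear span of the image
`φ_w(𝔤^r)` is all of `𝔤` (so `φ_w` is generating).
-/

/-- The word map `φ_w : 𝔤^r → 𝔤` associated to a Lie algebra word `w ∈ L_r`. -/
noncomputable def lieWordMap {K : Type} [CommRing K] {r : ℕ}
    (w : FreeLieAlgebra K (Fin r)) {L : Type} [LieRing L] [LieAlgebra K L]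
    (y : Fin r → L) : L :=
  FreeLieAlgebra.lift K y w

open scoped TensorProduct
open Polynomial

section Aux

variable {K : Type} [Field K] {L : Type} [LieRing L] [LieAlgebra K L]

/-- `A ⊗[K] L` is also a `K`-Lie algebra. -/
noncomputable instance extLieAlgebraK (A : Type) [CommRing A] [Algebra K A] :
    LieAlgebra K (A ⊗[K] L) where
  lie_smul t x y := by
    rw [← algebraMap_smul A t y, lie_smul, algebraMap_smul]

/-- Naturality of `FreeLieAlgebra.lift`. -/
theorem lift_natural {M : Type} [LieRing M] [LieAlgebra K M]
    (g : L →ₗ⁅K⁆ M) {r : ℕ} (y : Fin r → L) (w : FreeLieAlgebra K (Fin r)) :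
    FreeLieAlgebra.lift K (⇑g ∘ y) w = g (FreeLieAlgebra.lift K y w) := by
  have : FreeLieAlgebra.lift K (⇑g ∘ y) = g.comp (FreeLieAlgebra.lift K y) := by
    rw [← (FreeLieAlgebra.lift K).apply_symm_apply (g.comp (FreeLieAlgebra.lift K y))]
    congr 1
    rw [FreeLieAlgebra.lift_symm_apply]
    funext i
    simp [FreeLieAlgebra.lift_of_apply]
  rw [this]; rfl

/-- A linear map out of `A ⊗[K] L` which respects brackets on pure tensors is a
Lie algebra morphism. -/
theorem map_lie_of_tmul {A : Type} [CommRing A] [Algebra K A]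
    {N : Type} [LieRing N] [LieAlgebra K N]
    (F : A ⊗[K] L →ₗ[K] N)
    (h : ∀ (p : A) (a : L) (q : A) (b : L),
      F ⁅p ⊗ₜ[K] a, q ⊗ₜ[K] b⁆ = ⁅F (p ⊗ₜ[K] a), F (q ⊗ₜ[K] b)⁆)
    (x y : A ⊗[K] L) : F ⁅x, y⁆ = ⁅F x, F y⁆ := by
  induction x with
  | zero => rw [zero_lie, map_zero, zero_lie]
  | tmul p a =>
    induction y with
    | zero => rw [lie_zero, map_zero, lie_zero]
    | tmul q b => exact h p a q b
    | add u v hu hv => rw [lie_add, map_add, hu, hv, map_add, lie_add]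
  | add u v hu hv => rw [add_lie, map_add, hu, hv, map_add, add_lie]

/-- Evaluation at `t : K`, as a Lie algebra morphism `K[X] ⊗ L → L`. -/
noncomputable def evalLieHom (t : K) : K[X] ⊗[K] L →ₗ⁅K⁆ L where
  toLinearMap := TensorProduct.lift ((LinearMap.lsmul K L).comp (Polynomial.aeval t).toLinearMap)
  map_lie' := by
    intro x y
    simp only [LinearMap.toFun_eq_coe]
    refine map_lie_of_tmul _ (fun p a q b => ?_) x y
    simp only [LieAlgebra.ExtendScalars.bracket_tmul, TensorProduct.lift.tmul,
      LinearMap.coe_comp, Function.comp_apply, AlgHom.toLinearMap_apply, map_mul,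
      LinearMap.lsmul_apply, mul_smul, smul_lie, lie_smul]
    rw [smul_comm]

@[simp] theorem evalLieHom_tmul (t : K) (p : K[X]) (a : L) :
    evalLieHom t (p ⊗ₜ[K] a) = (Polynomial.eval t p) • a := by
  rw [← Polynomial.coe_aeval_eq_eval]
  rfl

/-- The morphism `K[X] ⊗ L → K[ε] ⊗ L` induced by `X ↦ ε`. -/
noncomputable def etaLieHom : K[X] ⊗[K] L →ₗ⁅K⁆ (DualNumber K) ⊗[K] L where
  toLinearMap := LinearMap.rTensor L (Polynomial.aeval (DualNumber.eps : DualNumber K)).toLinearMap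
  map_lie' := by
    intro x y
    simp only [LinearMap.toFun_eq_coe]
    refine map_lie_of_tmul (N := (DualNumber K) ⊗[K] L) _ (fun p a q b => ?_) x y
    simp only [LieAlgebra.ExtendScalars.bracket_tmul, LinearMap.rTensor_tmul,
      AlgHom.toLinearMap_apply, map_mul]

@[simp] theorem etaLieHom_tmul (p : K[X]) (a : L) :
    (etaLieHom : K[X] ⊗[K] L →ₗ⁅K⁆ (DualNumber K) ⊗[K] L) (p ⊗ₜ[K] a)
      = (Polynomial.aeval (DualNumber.eps : DualNumber K) p) ⊗ₜ[K] a := rfl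

/-- Generic computation used for `gLieHom`. -/
theorem gAux {B : Type} [CommRing B] [Algebra K B] (e : B) (he : e * e = 0) (x a b : L) :
    (1 : B) ⊗ₜ[K] ⁅a, b⁆ + e ⊗ₜ[K] ⁅x, ⁅a, b⁆⁆
      = ⁅(1 : B) ⊗ₜ[K] a + e ⊗ₜ[K] ⁅x, a⁆, (1 : B) ⊗ₜ[K] b + e ⊗ₜ[K] ⁅x, b⁆⁆ := by
  rw [add_lie, lie_add, lie_add]
  simp only [LieAlgebra.ExtendScalars.bracket_tmul, one_mul, mul_one, he,
    TensorProduct.zero_tmul, add_zero]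
  rw [leibniz_lie x a b, TensorProduct.tmul_add]
  abel

/-- `a ↦ 1 ⊗ a + ε ⊗ ⁅x, a⁆`, a Lie algebra morphism `L → K[ε] ⊗ L`. -/
noncomputable def gLieHom (x : L) : L →ₗ⁅K⁆ (DualNumber K) ⊗[K] L where
  toLinearMap := TensorProduct.mk K (DualNumber K) L 1
    + (TensorProduct.mk K (DualNumber K) L DualNumber.eps) ∘ₗ (LieAlgebra.ad K L x)
  map_lie' := by
    intro a b
    simp only [LinearMap.toFun_eq_coe, LinearMap.add_apply, LinearMap.coe_comp,
      Function.comp_apply, TensorProduct.mk_apply, LieAlgebra.ad_apply]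
    exact gAux DualNumber.eps DualNumber.eps_mul_eps x a b

@[simp] theorem gLieHom_apply (x a : L) :
    (gLieHom (K := K) x a : (DualNumber K) ⊗[K] L)
      = (1 : DualNumber K) ⊗ₜ[K] a + (DualNumber.eps : DualNumber K) ⊗ₜ[K] ⁅x, a⁆ := rfl

/-- Extract the `X¹` coefficient. -/
noncomputable def coeffOne : K[X] ⊗[K] L →ₗ[K] L :=
  TensorProduct.lift ((LinearMap.lsmul K L).comp (Polynomial.lcoeff K 1))

@[simp] theorem coeffOne_tmul (p : K[X]) (a : L) :
    (coeffOne (p ⊗ₜ[K] a) : L) = p.coeff 1 • a := rfl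

/-- Extract the `ε` coefficient. -/
noncomputable def epsCoeff : (DualNumber K) ⊗[K] L →ₗ[K] L :=
  TensorProduct.lift ((LinearMap.lsmul K L).comp (TrivSqZeroExt.sndHom K K))

@[simp] theorem epsCoeff_tmul (d : DualNumber K) (a : L) :
    (epsCoeff (d ⊗ₜ[K] a) : L) = d.snd • a := rfl

theorem snd_aeval_eps (p : K[X]) :
    (Polynomial.aeval (DualNumber.eps : DualNumber K) p).snd = p.coeff 1 := by
  induction p using Polynomial.induction_on' with
  | add p q hp hq => simp [hp, hq]
  | monomial n a =>
    rw [Polynomial.aeval_monomial]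
    rcases n with _ | _ | n
    · simp [TrivSqZeroExt.snd_mul, TrivSqZeroExt.algebraMap_eq_inl, Polynomial.coeff_monomial]
    · simp [TrivSqZeroExt.snd_mul, TrivSqZeroExt.algebraMap_eq_inl, Polynomial.coeff_monomial]
    · have : (DualNumber.eps : DualNumber K) ^ (n + 1 + 1) = 0 := by
        rw [pow_succ, pow_succ, mul_assoc, DualNumber.eps_mul_eps, mul_zero]
      simp [this, Polynomial.coeff_monomial]

theorem epsCoeff_eta (z : K[X] ⊗[K] L) : epsCoeff (etaLieHom (K := K) (L := L) z) = coeffOne z := by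
  induction z with
  | zero => simp
  | tmul p a => simp [snd_aeval_eps]
  | add u v hu hv => simp only [map_add, hu, hv]

/-- The scalar-valued polynomial attached to a functional `h`. -/
noncomputable def funcPoly (h : L →ₗ[K] K) : K[X] ⊗[K] L →ₗ[K] K[X] :=
  (TensorProduct.rid K K[X]).toLinearMap ∘ₗ LinearMap.lTensor K[X] h

@[simp] theorem funcPoly_tmul (h : L →ₗ[K] K) (p : K[X]) (a : L) :
    funcPoly h (p ⊗ₜ[K] a) = h a • p := rfl

theorem eval_funcPoly (h : L →ₗ[K] K) (t : K) (z : K[X] ⊗[K] L) :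
    Polynomial.eval t (funcPoly h z) = h (evalLieHom t z) := by
  induction z with
  | zero => simp
  | tmul p a => simp [mul_comm]
  | add u v hu hv => simp only [map_add, hu, hv, Polynomial.eval_add]

theorem coeff_funcPoly (h : L →ₗ[K] K) (z : K[X] ⊗[K] L) :
    (funcPoly h z).coeff 1 = h (coeffOne z) := by
  induction z with
  | zero => simp
  | tmul p a => simp [mul_comm]
  | add u v hu hv => simp only [map_add, hu, hv, Polynomial.coeff_add]

variable [CharZero K]

/-- The key lemma: the span of the image of a Lie word map is an ideal. -/
theorem bracket_mem_span {r : ℕ} (w : FreeLieAlgebra K (Fin r)) (x : L) (y : Fin r → L) :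
    ⁅x, lieWordMap w y⁆ ∈
      Submodule.span K (Set.range fun y : Fin r → L => lieWordMap w y) := by
  set V := Submodule.span K (Set.range fun y : Fin r → L => lieWordMap w y) with hV
  set z : Fin r → K[X] ⊗[K] L := fun i => (1 : K[X]) ⊗ₜ[K] y i + (X : K[X]) ⊗ₜ[K] ⁅x, y i⁆
    with hz
  set Φ : K[X] ⊗[K] L := FreeLieAlgebra.lift K z w with hΦ
  -- every evaluation of Φ lies in V
  have h1 : ∀ t : K, evalLieHom t Φ ∈ V := by
    intro t
    have hcz : ⇑(evalLieHom t : K[X] ⊗[K] L →ₗ⁅K⁆ L) ∘ z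
        = fun i => y i + t • ⁅x, y i⁆ := by
      funext i
      simp [hz]
    have h2 := lift_natural (evalLieHom t) z w
    rw [hcz] at h2
    rw [← h2]
    exact Submodule.subset_span ⟨_, rfl⟩
  -- the X-coefficient of Φ is the bracket
  have h2 : coeffOne Φ = ⁅x, lieWordMap w y⁆ := by
    have hnat := lift_natural (etaLieHom : K[X] ⊗[K] L →ₗ⁅K⁆ (DualNumber K) ⊗[K] L) z w
    have hze : ⇑(etaLieHom : K[X] ⊗[K] L →ₗ⁅K⁆ (DualNumber K) ⊗[K] L) ∘ z
        = ⇑(gLieHom x : L →ₗ⁅K⁆ (DualNumber K) ⊗[K] L) ∘ y := by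
      funext i
      simp [hz]
    have hg := lift_natural (gLieHom x : L →ₗ⁅K⁆ (DualNumber K) ⊗[K] L) y w
    rw [hze, hg] at hnat
    have hc : epsCoeff (etaLieHom (K := K) (L := L) Φ) = coeffOne Φ := epsCoeff_eta Φ
    rw [← hnat] at hc
    rw [← hc]
    simp [lieWordMap, TrivSqZeroExt.snd_one, DualNumber.snd_eps]
  -- extraction of the coefficient
  rw [← h2]
  rw [← Submodule.Quotient.mk_eq_zero]
  rw [← Module.forall_dual_apply_eq_zero_iff K]
  intro f
  set h : L →ₗ[K] K := f ∘ₗ V.mkQ with hh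
  have hPoly : funcPoly h Φ = 0 := by
    apply Polynomial.funext
    intro t
    rw [eval_funcPoly, Polynomial.eval_zero]
    have hm := h1 t
    simp only [hh, LinearMap.comp_apply]
    rw [show V.mkQ (evalLieHom t Φ) = 0 from (Submodule.Quotient.mk_eq_zero V).mpr hm]
    exact map_zero f
  have hcf := coeff_funcPoly h Φ
  rw [hPoly] at hcf
  simpa [hh] using hcf.symm

end Aux

theorem lie_word_map_span_image_eq_top :
    ∀ (K : Type) [Field K] [CharZero K]
      (L : Type) [LieRing L] [LieAlgebra K L] [Module.Finite K L],
      LieAlgebra.IsSimple K L →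
      ∀ (r : ℕ) (w : FreeLieAlgebra K (Fin r)),
      (∃ y : Fin r → L, lieWordMap w y ≠ 0) →
      Submodule.span K (Set.range fun y : Fin r → L => lieWordMap w y) = ⊤ := by
  intro K _ _ L _ _ _ hsimple r w hw
  obtain ⟨y, hy⟩ := hw
  set V := Submodule.span K (Set.range fun y : Fin r → L => lieWordMap w y) with hV
  let I : LieIdeal K L :=
    { V with
      lie_mem := by
        intro x m hm
        induction hm using Submodule.span_induction with
        | mem v hv =>
          obtain ⟨y', rfl⟩ := hv
          exact bracket_mem_span w x y'
        | zero => simp only [lie_zero]; exact V.zero_mem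
        | add u v _ _ hu hv => simpa [lie_add] using V.add_mem hu hv
        | smul t v _ hv => simpa [lie_smul] using V.smul_mem t hv }
  rcases hsimple.eq_bot_or_eq_top I with hbot | htop
  · exfalso
    apply hy
    have hmem : lieWordMap w y ∈ I := Submodule.subset_span ⟨y, rfl⟩
    rw [hbot] at hmem
    simpa using hmem
  · rw [eq_top_iff]
    intro m _
    have hm : m ∈ I := htop ▸ LieSubmodule.mem_top m
    exact hm
end

section
/- Let K be an algebraically closed field and n ≥ 1. For A, B ∈ M_n(K) write U(A) for the block matrix [[I_n, A],[0, I_n]] and L(B) for [[I_n, 0],[B, I_n]] in SL_{2n}(K). Then every g ∈ SL_{2n}(K) can be written as a product of 13 such matrices with alternating types starting with an upper one: there exist A_1,…,A_7, B_1,…,B_6 ∈ M_n(K) with g = U(A_1)·L(B_1)·U(A_2)·L(B_2)·⋯·L(B_6)·U(A_7). -/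
/-!
Statement 17: (Lemma 7.8 of Glazer–Hendel, after Kassabov.) Over an algebraically closed
field `K`, every `g ∈ SL_{2n}(K)` is a product of 13 block-unipotent matrices of alternating
types, beginning with an upper one:
`g = U(A₁)·L(B₁)·U(A₂)·L(B₂)·⋯·L(B₆)·U(A₇)`,
where `U(A) = [[I_n, A],[0, I_n]]` and `L(B) = [[I_n, 0],[B, I_n]]` with
`A, B ∈ M_n(K)`.  Here `2n×2n` matrices are indexed by `Fin n ⊕ Fin n`, and `SL_{2n}(K)`
means matrices of determinant `1`.
-/
open Matrix

variable {K : Type} [Field K]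

def finSuccSum (n : ℕ) : Fin (n+1) ≃ (Fin 1 ⊕ Fin n) where
  toFun := fun i => Fin.cases (Sum.inl 0) Sum.inr i
  invFun := fun s => Sum.elim (fun _ => (0 : Fin (n+1))) Fin.succ s
  left_inv := by
    intro i
    induction i using Fin.cases <;> simp
  right_inv := by
    rintro (x | x) <;> simp [Fin.fin_one_eq_zero]

def liftm {n : ℕ} (A : Matrix (Fin n) (Fin n) K) : Matrix (Fin (n+1)) (Fin (n+1)) K :=
  (fromBlocks (1 : Matrix (Fin 1) (Fin 1) K) 0 0 A).submatrix (finSuccSum n) (finSuccSum n)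

@[simp] lemma finSuccSum_zero (n : ℕ) : finSuccSum n 0 = Sum.inl 0 := rfl
@[simp] lemma finSuccSum_succ (n : ℕ) (i : Fin n) : finSuccSum n i.succ = Sum.inr i := by
  simp [finSuccSum]

@[simp] lemma liftm_zero_zero {n : ℕ} (A : Matrix (Fin n) (Fin n) K) : liftm A 0 0 = 1 := rfl
@[simp] lemma liftm_zero_succ {n : ℕ} (A : Matrix (Fin n) (Fin n) K) (j : Fin n) :
    liftm A 0 j.succ = 0 := by simp [liftm, submatrix_apply]
@[simp] lemma liftm_succ_zero {n : ℕ} (A : Matrix (Fin n) (Fin n) K) (i : Fin n) :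
    liftm A i.succ 0 = 0 := by simp [liftm, submatrix_apply]
@[simp] lemma liftm_succ_succ {n : ℕ} (A : Matrix (Fin n) (Fin n) K) (i j : Fin n) :
    liftm A i.succ j.succ = A i j := by simp [liftm, submatrix_apply]

lemma liftm_mul {n : ℕ} (A B : Matrix (Fin n) (Fin n) K) :
    liftm A * liftm B = liftm (A * B) := by
  unfold liftm
  rw [Matrix.submatrix_mul_equiv, Matrix.fromBlocks_multiply]
  simp

lemma liftm_one {n : ℕ} : liftm (1 : Matrix (Fin n) (Fin n) K) = 1 := by
  unfold liftm
  rw [Matrix.fromBlocks_one, Matrix.submatrix_one_equiv]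

lemma exists_inverse_of_isUnit {m : Type} [Fintype m] [DecidableEq m]
    {M : Matrix m m K} (h : IsUnit M) : ∃ N, M * N = 1 ∧ N * M = 1 := by
  obtain ⟨u, rfl⟩ := h
  exact ⟨↑u⁻¹, u.mul_inv, u.inv_mul⟩

lemma liftm_mul_apply_succ {n : ℕ} (A : Matrix (Fin n) (Fin n) K)
    (M : Matrix (Fin (n+1)) (Fin (n+1)) K) (i j : Fin n) :
    (liftm A * M) i.succ j.succ = (A * M.submatrix Fin.succ Fin.succ) i j := by
  rw [Matrix.mul_apply, Fin.sum_univ_succ, Matrix.mul_apply]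
  simp

lemma mul_liftm_apply_succ {n : ℕ} (M : Matrix (Fin (n+1)) (Fin (n+1)) K)
    (A : Matrix (Fin n) (Fin n) K) (i j : Fin n) :
    (M * liftm A) i.succ j.succ = (M.submatrix Fin.succ Fin.succ * A) i j := by
  rw [Matrix.mul_apply, Fin.sum_univ_succ, Matrix.mul_apply]
  simp

lemma mul_liftm_apply_zero {n : ℕ} (M : Matrix (Fin (n+1)) (Fin (n+1)) K)
    (A : Matrix (Fin n) (Fin n) K) (i : Fin (n+1)) :
    (M * liftm A) i 0 = M i 0 := by
  rw [Matrix.mul_apply, Fin.sum_univ_succ]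
  simp

lemma exists_triangularization [IsAlgClosed K] :
    ∀ (n : ℕ) (X : Matrix (Fin n) (Fin n) K),
    ∃ C Ci : Matrix (Fin n) (Fin n) K, C * Ci = 1 ∧ Ci * C = 1 ∧
      ∀ i j : Fin n, j < i → (Ci * X * C) i j = 0 := by
  intro n
  induction n with
  | zero => exact fun X => ⟨1, 1, by simp, by simp, fun i => i.elim0⟩
  | succ n IH =>
    intro X
    obtain ⟨μ, hμ⟩ := Module.End.exists_eigenvalue (Matrix.mulVecLin X)
    obtain ⟨v, hv⟩ := hμ.exists_hasEigenvector
    have hv0 : v ≠ 0 := hv.right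
    have hXv : X *ᵥ v = μ • v := hv.apply_eq_smul
    obtain ⟨i₀, hi₀⟩ : ∃ i, v i ≠ 0 := by
      by_contra h
      push_neg at h
      exact hv0 (funext fun i => h i)
    set τ : Equiv.Perm (Fin (n+1)) := Equiv.swap (0 : Fin (n+1)) i₀ with hτ
    have hτi₀ : τ i₀ = 0 := Equiv.swap_apply_right 0 i₀
    have hττ : ∀ a, τ (τ a) = a := fun a => Equiv.swap_apply_self _ _ a
    have hτ0 : ∀ i, i ≠ i₀ → τ i ≠ 0 := by
      intro i hi h
      apply hi
      have h2 := congrArg τ h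
      rw [hττ] at h2
      rw [h2, hτ, Equiv.swap_apply_left]
    set C₀ : Matrix (Fin (n+1)) (Fin (n+1)) K :=
      Matrix.of (fun i j => if j = 0 then v i else if i = τ j then 1 else 0) with hC₀
    have hmulVec : ∀ x : Fin (n+1) → K,
        C₀ *ᵥ x = fun i => v i * x 0 + (if i = i₀ then 0 else x (τ i)) := by
      intro x
      funext i
      show ∑ j, (if j = 0 then v i else if i = τ j then 1 else 0) * x j = _
      rw [Fin.sum_univ_succ]
      simp only [if_pos rfl, Fin.succ_ne_zero, ite_mul, one_mul, zero_mul, if_false,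
        ite_false]
      congr 1
      by_cases hi : i = i₀
      · rw [if_pos hi]
        apply Finset.sum_eq_zero
        intro j _
        rw [if_neg]
        intro hij
        have h2 := congrArg τ hij
        rw [hττ, hi, hτi₀] at h2
        exact (Fin.succ_ne_zero j) h2.symm
      · rw [if_neg hi]
        obtain ⟨k, hk⟩ : ∃ k : Fin n, τ i = k.succ :=
          ⟨(τ i).pred (hτ0 i hi), (Fin.succ_pred _ _).symm⟩
        have hcond : ∀ j : Fin n, (i = τ j.succ) ↔ (j = k) := by
          intro j
          constructor
          · intro h
            have h2 := congrArg τ h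
            rw [hττ] at h2
            exact Fin.succ_injective _ (h2.symm.trans hk)
          · intro h
            rw [h, ← hk, hττ]
        calc (∑ j : Fin n, if i = τ j.succ then x j.succ else 0)
            = ∑ j : Fin n, if j = k then x j.succ else 0 :=
              Finset.sum_congr rfl (fun j _ => if_congr (hcond j) rfl rfl)
          _ = x k.succ := by simp
          _ = x (τ i) := by rw [hk]
    have hinj : Function.Injective (C₀.mulVec) := by
      intro x y hxy
      have hsub : C₀ *ᵥ (x - y) = 0 := by rw [Matrix.mulVec_sub, hxy, sub_self]
      rw [hmulVec] at hsub
      have hx0 : (x - y) 0 = 0 := by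
        have h2 := congrFun hsub i₀
        simp only [if_pos rfl, if_true, eq_self_iff_true, add_zero, Pi.zero_apply] at h2
        exact (mul_eq_zero.mp h2).resolve_left hi₀
      have hall : x - y = 0 := by
        funext j
        by_cases hj : j = 0
        · rw [hj]; exact hx0
        · have hτji₀ : τ j ≠ i₀ := by
            intro h
            apply hj
            have h2 := congrArg τ h
            rwa [hττ, hτi₀] at h2
          have h2 := congrFun hsub (τ j)
          rwa [if_neg hτji₀, hττ, hx0, mul_zero, zero_add, Pi.zero_apply] at h2
      exact sub_eq_zero.mp hall
    obtain ⟨Ci₀, hCC, hCiC⟩ :=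
      exists_inverse_of_isUnit (Matrix.mulVec_injective_iff_isUnit.mp hinj)
    set Y := Ci₀ * X * C₀ with hYdef
    have hC₀e0 : C₀ *ᵥ (Pi.single 0 1) = v := by
      rw [hmulVec]
      funext i
      by_cases hi : i = i₀
      · simp [hi]
      · rw [if_neg hi]
        simp [Pi.single_apply, if_neg (hτ0 i hi)]
    have hYcol : ∀ i : Fin n, Y i.succ 0 = 0 := by
      have hY0 : Y *ᵥ (Pi.single 0 1) = μ • ((Pi.single 0 1 : Fin (n+1) → K)) := by
        rw [hYdef, ← Matrix.mulVec_mulVec, ← Matrix.mulVec_mulVec, hC₀e0, hXv,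
          Matrix.mulVec_smul]
        congr 1
        have h2 : Ci₀ *ᵥ v = Ci₀ *ᵥ (C₀ *ᵥ Pi.single 0 1) := by rw [hC₀e0]
        rw [h2, Matrix.mulVec_mulVec, hCiC, Matrix.one_mulVec]
      intro i
      have h1 : (Y *ᵥ Pi.single 0 1) i.succ = Y i.succ 0 := by
        rw [Matrix.mulVec_single]
        simp
      rw [hY0] at h1
      rw [← h1]
      simp [Pi.single_apply, (Fin.succ_ne_zero i)]
    obtain ⟨C', Ci', hC'1, hC'2, hC'tri⟩ := IH (Y.submatrix Fin.succ Fin.succ)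
    refine ⟨C₀ * liftm C', liftm Ci' * Ci₀, ?_, ?_, ?_⟩
    · have : C₀ * liftm C' * (liftm Ci' * Ci₀) = C₀ * (liftm C' * liftm Ci') * Ci₀ := by
        simp only [mul_assoc]
      rw [this, liftm_mul, hC'1, liftm_one, mul_one, hCC]
    · have : liftm Ci' * Ci₀ * (C₀ * liftm C') = liftm Ci' * ((Ci₀ * C₀) * liftm C') := by
        simp only [mul_assoc]
      rw [this, hCiC, one_mul, liftm_mul, hC'2, liftm_one]
    · intro i j hij
      have hZ : liftm Ci' * Ci₀ * X * (C₀ * liftm C') = liftm Ci' * Y * liftm C' := by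
        rw [hYdef]
        simp only [mul_assoc]
      rw [hZ]
      induction i using Fin.cases with
      | zero => exact absurd hij (Fin.not_lt_zero j)
      | succ i' =>
        induction j using Fin.cases with
        | zero =>
          rw [mul_liftm_apply_zero, Matrix.mul_apply, Fin.sum_univ_succ]
          simp [hYcol]
        | succ j' =>
          rw [mul_liftm_apply_succ]
          have hsub : (liftm Ci' * Y).submatrix Fin.succ Fin.succ =
              Ci' * (Y.submatrix Fin.succ Fin.succ) := by
            ext a b
            rw [submatrix_apply, liftm_mul_apply_succ]
          rw [hsub]
          exact hC'tri i' j' (by rwa [← Fin.succ_lt_succ_iff])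

variable {K : Type} [Field K]

lemma dlemma [Infinite K] :
    ∀ (N : ℕ) (ι : Type) (_ : Fintype ι) (_ : DecidableEq ι), Fintype.card ι = N →
    ∀ lam : ι → K, (∀ i, lam i ≠ 0) → ∏ i, lam i = 1 →
    ∃ (d : ι → K) (σ : Equiv.Perm ι), (∀ i, d i ≠ 0) ∧ Function.Injective d ∧
      ∀ i, d (σ i) = d i * lam i := by
  intro N
  induction N using Nat.strong_induction_on with
  | _ N IH =>
    intro ι hFin hDec hcard lam hlam0 hlam1
    classical
    by_cases hA : ∃ s : Finset ι, s.Nonempty ∧ s ≠ Finset.univ ∧ ∏ i ∈ s, lam i = 1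
    · obtain ⟨s, hsne, hsuniv, hsprod⟩ := hA
      have hprodc : ∏ i ∈ sᶜ, lam i = 1 := by
        have h := Finset.prod_mul_prod_compl s lam
        rw [hsprod, one_mul, hlam1] at h
        exact h
      have hprod1 : ∏ i : {x // x ∈ s}, lam ↑i = 1 := by
        rw [← Finset.prod_subtype s (fun x => Iff.rfl) lam]
        exact hsprod
      have hprod2 : ∏ i : {x // ¬ x ∈ s}, lam ↑i = 1 := by
        rw [← Finset.prod_subtype sᶜ (fun x => Finset.mem_compl) lam]
        exact hprodc
      have hcard1 : Fintype.card {x // x ∈ s} = s.card := Fintype.card_coe s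
      have hcard1lt : s.card < N := by
        rw [← hcard]
        exact Finset.card_lt_card (Finset.ssubset_univ_iff.mpr hsuniv)
      have hcard2 : Fintype.card {x // ¬ x ∈ s} = N - s.card := by
        rw [Fintype.card_subtype_compl, hcard, hcard1]
      have hcard2lt : N - s.card < N := by
        have h1 : 1 ≤ s.card := Finset.card_pos.mpr hsne
        have h2 : s.card ≤ N := by rw [← hcard]; exact Finset.card_le_univ s
        omega
      obtain ⟨d₁, σ₁, hd₁0, hd₁inj, hd₁⟩ :=
        IH s.card hcard1lt {x // x ∈ s} inferInstance (Subtype.instDecidableEq) hcard1 (fun i => lam ↑i)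
          (fun i => hlam0 ↑i) hprod1
      obtain ⟨d₂, σ₂, hd₂0, hd₂inj, hd₂⟩ :=
        IH (N - s.card) hcard2lt {x // ¬ x ∈ s} inferInstance (Subtype.instDecidableEq) hcard2 (fun i => lam ↑i)
          (fun i => hlam0 ↑i) hprod2
      obtain ⟨t, ht⟩ := Infinite.exists_notMem_finset
        ((Finset.univ.image (fun pr : {x // x ∈ s} × {x // ¬ x ∈ s} =>
            d₁ pr.1 * (d₂ pr.2)⁻¹)) ∪ {(0 : K)})
      have ht0 : t ≠ 0 := fun h =>
        ht (Finset.mem_union_right _ (by rw [h]; exact Finset.mem_singleton_self 0))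
      have htd : ∀ (i : {x // x ∈ s}) (j : {x // ¬ x ∈ s}), d₁ i ≠ t * d₂ j := by
        intro i j h
        apply ht
        apply Finset.mem_union_left
        apply Finset.mem_image.mpr
        refine ⟨(i, j), Finset.mem_univ _, ?_⟩
        rw [h]
        exact mul_inv_cancel_right₀ (hd₂0 j) t
      set d : ι → K := fun x => if h : x ∈ s then d₁ ⟨x, h⟩ else t * d₂ ⟨x, h⟩ with hd
      refine ⟨d, Equiv.Perm.subtypeCongr σ₁ σ₂, ?_, ?_, ?_⟩
      · intro x
        by_cases h : x ∈ s
        · simp only [hd, dif_pos h]; exact hd₁0 _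
        · simp only [hd, dif_neg h]; exact mul_ne_zero ht0 (hd₂0 _)
      · intro a b hab
        by_cases ha : a ∈ s <;> by_cases hb : b ∈ s <;>
          simp only [hd, dif_pos, dif_neg, ha, hb] at hab
        · exact congrArg Subtype.val (hd₁inj hab)
        · exact absurd hab (htd _ _)
        · exact absurd hab.symm (htd _ _)
        · exact congrArg Subtype.val (hd₂inj (mul_left_cancel₀ ht0 hab))
      · intro x
        by_cases h : x ∈ s
        · rw [Equiv.Perm.subtypeCongr.left_apply σ₁ σ₂ h]
          have hm : ((σ₁ ⟨x, h⟩ : {x // x ∈ s}) : ι) ∈ s := (σ₁ ⟨x, h⟩).property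
          simp only [hd, dif_pos h, dif_pos hm, Subtype.coe_eta]
          exact hd₁ ⟨x, h⟩
        · rw [Equiv.Perm.subtypeCongr.right_apply σ₁ σ₂ h]
          have hm : ¬ ((σ₂ ⟨x, h⟩ : {x // ¬ x ∈ s}) : ι) ∈ s := (σ₂ ⟨x, h⟩).property
          simp only [hd, dif_neg h, dif_neg hm, Subtype.coe_eta]
          rw [mul_assoc, ← hd₂ ⟨x, h⟩]
    · match N, hcard, IH with
      | 0, hcard, _ =>
        haveI : IsEmpty ι := Fintype.card_eq_zero_iff.mp hcard
        exact ⟨fun _ => 1, 1, fun i => (IsEmpty.false i).elim,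
          fun a => (IsEmpty.false a).elim, fun i => (IsEmpty.false i).elim⟩
      | (m+1), hcard, _ =>
        set e : Fin (m+1) ≃ ι := (Fintype.equivFinOfCardEq hcard).symm with he
        set PP : Fin (m+1) → K :=
          fun k => ∏ i ∈ Finset.univ.filter (fun i : Fin (m+1) => i < k), lam (e i) with hPP
        have hPP0 : ∀ k, PP k ≠ 0 := by
          intro k
          apply Finset.prod_ne_zero_iff.mpr
          intro i _
          exact hlam0 _
        have hsplit : ∀ j k : Fin (m+1), j < k →
            PP k = PP j * ∏ i ∈ Finset.univ.filter (fun i => j ≤ i ∧ i < k), lam (e i) := by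
          intro j k hjk
          simp only [hPP]
          rw [← Finset.prod_union]
          · congr 1
            apply Finset.ext
            intro i
            simp only [Finset.mem_union, Finset.mem_filter, Finset.mem_univ, true_and]
            constructor
            · intro h
              by_cases hij : i < j
              · exact Or.inl hij
              · exact Or.inr ⟨not_lt.mp hij, h⟩
            · rintro (h | ⟨_, h2⟩)
              · exact lt_trans h hjk
              · exact h2
          · rw [Finset.disjoint_filter]
            intro i _ h1 h2
            exact absurd h1 (not_lt.mpr h2.1)
        have hone : ∀ j k : Fin (m+1), j < k → PP j = PP k → False := by
          intro j k hjk hPPeq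
          have key := hsplit j k hjk
          rw [← hPPeq] at key
          have hX : ∏ i ∈ Finset.univ.filter (fun i => j ≤ i ∧ i < k), lam (e i) = 1 := by
            have h2 : PP j * 1 = PP j * ∏ i ∈ Finset.univ.filter
                (fun i => j ≤ i ∧ i < k), lam (e i) := by
              rw [mul_one, ← key]
            exact (mul_left_cancel₀ (hPP0 j) h2).symm
          apply hA
          refine ⟨(Finset.univ.filter (fun i => j ≤ i ∧ i < k)).image e, ?_, ?_, ?_⟩
          · refine ⟨e j, Finset.mem_image.mpr ⟨j, ?_, rfl⟩⟩
            simp only [Finset.mem_filter, Finset.mem_univ, true_and]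
            exact ⟨le_refl j, hjk⟩
          · intro h
            have hk : e k ∈ (Finset.univ.filter
                (fun i => j ≤ i ∧ i < k)).image e := by rw [h]; exact Finset.mem_univ _
            obtain ⟨i, hi, hik⟩ := Finset.mem_image.mp hk
            have : i = k := e.injective hik
            subst this
            simp only [Finset.mem_filter, Finset.mem_univ, true_and] at hi
            exact absurd hi.2 (lt_irrefl i)
          · rw [Finset.prod_image (fun a _ b _ h => e.injective h)]
            exact hX
        have hPPinj : Function.Injective PP := by
          intro j k hjk
          by_contra hne
          rcases lt_or_gt_of_ne hne with h | h
          · exact hone j k h hjk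
          · exact hone k j h hjk.symm
        have hkey : ∀ k : Fin (m+1), PP (k + 1) = PP k * lam (e k) := by
          intro k
          by_cases hk : k = Fin.last m
          · subst hk
            rw [Fin.last_add_one]
            have hPPzero : PP 0 = 1 := by
              simp only [hPP]
              have : Finset.univ.filter (fun i : Fin (m+1) => i < 0) = ∅ := by
                apply Finset.eq_empty_of_forall_notMem
                intro i hi
                simp only [Finset.mem_filter] at hi
                exact absurd hi.2 (Fin.not_lt_zero i)
              rw [this, Finset.prod_empty]
            have huniv : (Finset.univ : Finset (Fin (m+1))) =
                insert (Fin.last m) (Finset.univ.filter (fun i => i < Fin.last m)) := by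
              apply Finset.ext
              intro i
              simp only [Finset.mem_insert, Finset.mem_filter, Finset.mem_univ, true_and,
                true_iff]
              rcases eq_or_ne i (Fin.last m) with h | h
              · exact Or.inl h
              · refine Or.inr ?_
                rw [Fin.lt_def]
                have h1 : (i : ℕ) ≤ m := Nat.lt_succ_iff.mp i.isLt
                have h2 : (i : ℕ) ≠ m := fun hh => h (Fin.ext (by simp [hh]))
                simp only [Fin.val_last]
                omega
            have hall : ∏ i : Fin (m+1), lam (e i) = 1 := by
              rw [Equiv.prod_comp e lam, hlam1]
            rw [huniv, Finset.prod_insert (by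
              intro hmem
              simp only [Finset.mem_filter] at hmem
              exact absurd hmem.2 (lt_irrefl _))] at hall
            rw [hPPzero]
            calc (1 : K) = lam (e (Fin.last m)) * PP (Fin.last m) := hall.symm
              _ = PP (Fin.last m) * lam (e (Fin.last m)) := mul_comm _ _
          · have hkm : (k : ℕ) < m := by
              have h1 : (k : ℕ) ≤ m := Nat.lt_succ_iff.mp k.isLt
              have h2 : (k : ℕ) ≠ m := fun hh => hk (Fin.ext (by simp [hh]))
              omega
            have hval : ((k + 1 : Fin (m+1)) : ℕ) = (k : ℕ) + 1 :=
              Fin.val_add_one_of_lt (by rw [Fin.lt_def, Fin.val_last]; exact hkm)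
            have hins : Finset.univ.filter (fun i : Fin (m+1) => i < k + 1) =
                insert k (Finset.univ.filter (fun i => i < k)) := by
              apply Finset.ext
              intro i
              simp only [Finset.mem_insert, Finset.mem_filter, Finset.mem_univ, true_and]
              rw [Fin.lt_def, Fin.lt_def, hval]
              constructor
              · intro h
                rcases Nat.lt_succ_iff_lt_or_eq.mp h with h | h
                · exact Or.inr h
                · exact Or.inl (Fin.ext h)
              · rintro (h | h)
                · rw [h]; omega
                · omega
            simp only [hPP]
            rw [hins, Finset.prod_insert (by
              intro hmem
              simp only [Finset.mem_filter] at hmem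
              exact absurd hmem.2 (lt_irrefl _))]
            rw [mul_comm]
        refine ⟨fun x => PP (e.symm x), (e.symm.trans ((finRotate (m+1)).trans e) : ι ≃ ι),
          fun x => hPP0 _, fun a b h => e.symm.injective (hPPinj h), ?_⟩
        intro x
        simp only [Equiv.trans_apply, Equiv.symm_apply_apply]
        rw [finRotate_succ_apply, hkey (e.symm x), Equiv.apply_symm_apply]

lemma exists_inverse_of_isUnit'' {m : Type} [Fintype m] [DecidableEq m]
    {M : Matrix m m K} (h : IsUnit M) : ∃ N, M * N = 1 ∧ N * M = 1 := by
  obtain ⟨u, rfl⟩ := h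
  exact ⟨↑u⁻¹, u.mul_inv, u.inv_mul⟩

def pmat {n : ℕ} (σ : Equiv.Perm (Fin n)) : Matrix (Fin n) (Fin n) K :=
  Matrix.of fun i j => if i = σ j then 1 else 0

lemma pmat_mul_pmat {n : ℕ} (σ τ : Equiv.Perm (Fin n)) :
    (pmat σ : Matrix (Fin n) (Fin n) K) * pmat τ = pmat (σ * τ) := by
  ext i j
  rw [Matrix.mul_apply]
  simp only [pmat, Matrix.of_apply]
  rw [Finset.sum_eq_single (τ j)]
  · simp [Equiv.Perm.mul_apply]
    congr
  · intro k _ hk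
    rw [if_neg (fun h => hk h), mul_zero]
  · intro h
    exact absurd (Finset.mem_univ _) h

lemma pmat_one {n : ℕ} : (pmat (1 : Equiv.Perm (Fin n)) : Matrix (Fin n) (Fin n) K) = 1 := by
  ext i j
  simp only [pmat, Matrix.of_apply, Equiv.Perm.one_apply, Matrix.one_apply]
  congr

lemma pmat_mul_diagonal {n : ℕ} (σ : Equiv.Perm (Fin n)) (d : Fin n → K) :
    (pmat σ) * diagonal (fun i => d (σ i)) = diagonal d * pmat σ := by
  ext i j
  rw [Matrix.mul_diagonal, Matrix.diagonal_mul]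
  simp only [pmat, Matrix.of_apply]
  by_cases h : i = σ j
  · simp [h]
  · simp [h]

lemma triangular_distinct_diag {n : ℕ} (T : Matrix (Fin n) (Fin n) K)
    (htri : ∀ i j : Fin n, j < i → T i j = 0)
    (hinj : Function.Injective (fun i => T i i)) :
    ∃ C₂ Ci₂ : Matrix (Fin n) (Fin n) K, C₂ * Ci₂ = 1 ∧ Ci₂ * C₂ = 1 ∧
      T * C₂ = C₂ * diagonal (fun i => T i i) := by
  set v : Fin n → K := fun i => T i i with hv
  have hweig : ∀ i : Fin n, ∃ w : Fin n → K, w ≠ 0 ∧ T *ᵥ w = v i • w := by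
    intro i
    have hdet : (T - v i • 1).det = 0 := by
      have htri' : (T - v i • 1).BlockTriangular id := by
        intro a b hab
        have h1 : T a b = 0 := htri a b hab
        have hab' : a ≠ b := by
          intro h
          rw [h] at hab
          exact absurd hab (lt_irrefl _)
        have h2 : ((v i • 1 : Matrix (Fin n) (Fin n) K)) a b = 0 := by
          rw [Matrix.smul_apply, Matrix.one_apply_ne hab', smul_zero]
        simp [Matrix.sub_apply, h1, h2]
      rw [Matrix.det_of_upperTriangular htri']
      apply Finset.prod_eq_zero (Finset.mem_univ i)
      simp [Matrix.sub_apply, Matrix.smul_apply, Matrix.one_apply_eq, hv]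
    obtain ⟨w, hw0, hww⟩ := (Matrix.exists_mulVec_eq_zero_iff).mpr hdet
    refine ⟨w, hw0, ?_⟩
    rw [Matrix.sub_mulVec] at hww
    have h3 := sub_eq_zero.mp hww
    rw [h3, Matrix.smul_mulVec, Matrix.one_mulVec]
  choose w hw0 hww using hweig
  have hli : LinearIndependent K w := by
    apply Module.End.eigenvectors_linearIndependent' (Matrix.mulVecLin T) v hinj
    intro i
    exact ⟨Module.End.mem_eigenspace_iff.mpr (by rw [Matrix.mulVecLin_apply]; exact hww i),
      hw0 i⟩
  set C₂ : Matrix (Fin n) (Fin n) K := Matrix.of (fun i j => w j i) with hC₂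
  have hinj2 : Function.Injective (C₂.mulVec) := by
    intro x y hxy
    have hs : C₂ *ᵥ (x - y) = 0 := by rw [Matrix.mulVec_sub, hxy, sub_self]
    have hsum : ∑ j, (x - y) j • w j = 0 := by
      funext i
      have h2 := congrFun hs i
      simp only [Matrix.mulVec, dotProduct, hC₂, Matrix.of_apply, Pi.zero_apply] at h2
      simp only [Finset.sum_apply, Pi.smul_apply, smul_eq_mul, Pi.zero_apply]
      rw [← h2]
      apply Finset.sum_congr rfl
      intro j _
      ring
    have hz := Fintype.linearIndependent_iff.mp hli (x - y) hsum
    funext i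
    have := hz i
    exact sub_eq_zero.mp (by simpa using this) ▸ rfl
  obtain ⟨Ci₂, h1, h2⟩ := exists_inverse_of_isUnit'' (Matrix.mulVec_injective_iff_isUnit.mp hinj2)
  refine ⟨C₂, Ci₂, h1, h2, ?_⟩
  ext i j
  rw [Matrix.mul_apply, Matrix.mul_diagonal]
  have h3 : ∑ k, T i k * C₂ k j = (T *ᵥ (w j)) i := by
    rw [Matrix.mulVec, dotProduct]
    apply Finset.sum_congr rfl
    intro k _
    simp [hC₂]
  rw [h3, hww j]
  simp [hC₂, mul_comm]

lemma lemE [IsAlgClosed K] {n : ℕ} (X : Matrix (Fin n) (Fin n) K) (hdet : X.det = 1) :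
    ∃ Y Yi G Gi : Matrix (Fin n) (Fin n) K, Y * Yi = 1 ∧ Yi * Y = 1 ∧
      G * Gi = 1 ∧ Gi * G = 1 ∧ X * Y = G * Y * Gi := by
  obtain ⟨C, Ci, hCCi, hCiC, htri⟩ := exists_triangularization n X
  set T := Ci * X * C with hT
  have hX : X = C * T * Ci := by
    rw [hT]
    calc X = (C * Ci) * X * (C * Ci) := by rw [hCCi, one_mul, mul_one]
      _ = C * (Ci * X * C) * Ci := by simp only [mul_assoc]
  set lam : Fin n → K := fun i => T i i with hlam
  have hTtri : T.BlockTriangular id := fun a b hab => htri a b hab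
  have hdetT : T.det = 1 := by
    have h1 : T.det = Ci.det * X.det * C.det := by rw [hT, Matrix.det_mul, Matrix.det_mul]
    have h2 : Ci.det * C.det = 1 := by rw [← Matrix.det_mul, hCiC, Matrix.det_one]
    rw [h1, hdet]
    calc Ci.det * 1 * C.det = Ci.det * C.det := by ring
      _ = 1 := h2
  have hprod : ∏ i, lam i = 1 := by
    rw [← Matrix.det_of_upperTriangular hTtri] at *
    exact hdetT
  have hlam0 : ∀ i, lam i ≠ 0 := by
    intro i h
    rw [Finset.prod_eq_zero (Finset.mem_univ i) h] at hprod
    exact zero_ne_one hprod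
  obtain ⟨d, σ, hd0, hdinj, hdmain⟩ :=
    dlemma (Fintype.card (Fin n)) (Fin n) inferInstance inferInstance rfl lam hlam0 hprod
  set D := diagonal d with hD
  set TD := T * D with hTD
  have hTDtri : ∀ i j : Fin n, j < i → TD i j = 0 := by
    intro i j hij
    rw [hTD, Matrix.mul_diagonal]
    rw [htri i j hij, zero_mul]
  have hTDdiag : ∀ i, TD i i = d (σ i) := by
    intro i
    rw [hTD, Matrix.mul_diagonal, hdmain i, mul_comm]
  have hTDInj : Function.Injective (fun i => TD i i) := by
    have h3 : (fun i => TD i i) = (fun i => d (σ i)) := funext hTDdiag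
    rw [h3]
    exact hdinj.comp σ.injective
  obtain ⟨C₂, Ci₂, hC₂1, hC₂2, hC₂main⟩ := triangular_distinct_diag TD hTDtri hTDInj
  set Pm : Matrix (Fin n) (Fin n) K := pmat σ with hPm
  set Pmi : Matrix (Fin n) (Fin n) K := pmat σ⁻¹ with hPmi
  have hPmPmi : Pm * Pmi = 1 := by rw [hPm, hPmi, pmat_mul_pmat, mul_inv_cancel, pmat_one]
  have hPmiPm : Pmi * Pm = 1 := by rw [hPm, hPmi, pmat_mul_pmat, inv_mul_cancel, pmat_one]
  have hPmD : Pm * diagonal (fun i => d (σ i)) = D * Pm := pmat_mul_diagonal σ d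
  have hdv : diagonal (fun i => d (σ i)) = Pmi * (D * Pm) := by
    have h4 : Pmi * (Pm * diagonal (fun i => d (σ i))) = Pmi * (D * Pm) := by rw [hPmD]
    rw [← mul_assoc, hPmiPm, one_mul] at h4
    exact h4
  have hdiagv : diagonal (fun i => TD i i) = diagonal (fun i => d (σ i)) := by
    rw [show (fun i => TD i i) = (fun i => d (σ i)) from funext hTDdiag]
  have hkey : TD * C₂ = C₂ * (Pmi * (D * Pm)) := by rw [hC₂main, hdiagv, hdv]
  have hTD2 : T * D = C₂ * (Pmi * (D * Pm)) * Ci₂ := by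
    have h5 := congrArg (fun M => M * Ci₂) hkey
    rw [mul_assoc, hC₂1, mul_one] at h5
    rw [← hTD, h5]
  set Dinv : Matrix (Fin n) (Fin n) K := diagonal (fun i => (d i)⁻¹) with hDinv
  have hDDi : D * Dinv = 1 := by
    rw [hD, hDinv, Matrix.diagonal_mul_diagonal]
    rw [show (fun i => d i * (d i)⁻¹) = fun _ => (1 : K) from
      funext (fun i => mul_inv_cancel₀ (hd0 i))]
    exact Matrix.diagonal_one
  have hDiD : Dinv * D = 1 := by
    rw [hD, hDinv, Matrix.diagonal_mul_diagonal]
    rw [show (fun i => (d i)⁻¹ * d i) = fun _ => (1 : K) from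
      funext (fun i => inv_mul_cancel₀ (hd0 i))]
    exact Matrix.diagonal_one
  have hmidCiC : ∀ Z : Matrix (Fin n) (Fin n) K, Ci * (C * Z) = Z := fun Z => by
    rw [← mul_assoc, hCiC, one_mul]
  have hmidPmiPm : ∀ Z : Matrix (Fin n) (Fin n) K, Pmi * (Pm * Z) = Z := fun Z => by
    rw [← mul_assoc, hPmiPm, one_mul]
  have hmidPmPmi : ∀ Z : Matrix (Fin n) (Fin n) K, Pm * (Pmi * Z) = Z := fun Z => by
    rw [← mul_assoc, hPmPmi, one_mul]
  have hmidC₂ : ∀ Z : Matrix (Fin n) (Fin n) K, C₂ * (Ci₂ * Z) = Z := fun Z => by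
    rw [← mul_assoc, hC₂1, one_mul]
  have hmidCi₂ : ∀ Z : Matrix (Fin n) (Fin n) K, Ci₂ * (C₂ * Z) = Z := fun Z => by
    rw [← mul_assoc, hC₂2, one_mul]
  have hmidD : ∀ Z : Matrix (Fin n) (Fin n) K, D * (Dinv * Z) = Z := fun Z => by
    rw [← mul_assoc, hDDi, one_mul]
  have hmidDi : ∀ Z : Matrix (Fin n) (Fin n) K, Dinv * (D * Z) = Z := fun Z => by
    rw [← mul_assoc, hDiD, one_mul]
  refine ⟨C * D * Ci, C * Dinv * Ci, C * (C₂ * (Pmi * Ci)), C * (Pm * (Ci₂ * Ci)),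
    ?_, ?_, ?_, ?_, ?_⟩
  · simp only [mul_assoc]
    rw [hmidCiC, hmidD, hCCi]
  · simp only [mul_assoc]
    rw [hmidCiC, hmidDi, hCCi]
  · simp only [mul_assoc]
    rw [hmidCiC, hmidPmiPm, hmidC₂, hCCi]
  · simp only [mul_assoc]
    rw [hmidCiC, hmidCi₂, hmidPmPmi, hCCi]
  · have hXY : X * (C * D * Ci) = C * (T * (D * Ci)) := by
      rw [hX]
      simp only [mul_assoc]
      rw [hmidCiC]
    have hGYGi : (C * (C₂ * (Pmi * Ci))) * (C * D * Ci) * (C * (Pm * (Ci₂ * Ci))) =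
        C * (C₂ * (Pmi * (D * (Pm * (Ci₂ * Ci))))) := by
      simp only [mul_assoc]
      rw [hmidCiC, hmidCiC]
    rw [hXY, hGYGi]
    have h6 : C * (T * (D * Ci)) = C * ((T * D) * Ci) := by simp only [mul_assoc]
    rw [h6, hTD2]
    simp only [mul_assoc]

/-- stable rank one for matrices over a field: if `ker P ∩ ker R = 0` then
`R + B * P` is invertible for some `B`. -/
lemma exists_B_unit {n : ℕ} (P R : Matrix (Fin n) (Fin n) K)
    (h : ∀ x : Fin n → K, P *ᵥ x = 0 → R *ᵥ x = 0 → x = 0) :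
    ∃ B : Matrix (Fin n) (Fin n) K, IsUnit (R + B * P) := by
  classical
  set V := (Fin n → K)
  set f : V →ₗ[K] V := P.mulVecLin with hf
  set g : V →ₗ[K] V := R.mulVecLin with hg
  have hker : ∀ x : V, f x = 0 → g x = 0 → x = 0 := by
    intro x h1 h2
    exact h x h1 h2
  set V₁ := LinearMap.ker f with hV₁
  obtain ⟨W, hW⟩ := Submodule.exists_isCompl V₁
  -- g restricted to V₁ is injective
  set gV : V₁ →ₗ[K] V := g.comp V₁.subtype with hgV
  have hgVinj : Function.Injective gV := by
    rw [← LinearMap.ker_eq_bot]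
    rw [Submodule.eq_bot_iff]
    rintro ⟨x, hx⟩ hx2
    have hfx : f x = 0 := hx
    have hgx : g x = 0 := hx2
    have := hker x hfx hgx
    exact Subtype.ext this
  set V' := LinearMap.range gV with hV'
  obtain ⟨U', hU'⟩ := Submodule.exists_isCompl V'
  -- f restricted to W is injective
  set fW : W →ₗ[K] V := f.comp W.subtype with hfW
  have hfWinj : Function.Injective fW := by
    rw [← LinearMap.ker_eq_bot, Submodule.eq_bot_iff]
    rintro ⟨x, hx⟩ hx2
    have hfx : f x = 0 := hx2
    have hxV₁ : x ∈ V₁ := hfx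
    have : x ∈ V₁ ⊓ W := ⟨hxV₁, hx⟩
    rw [hW.inf_eq_bot] at this
    exact Subtype.ext this
  -- dimension count
  have hd1 : Module.finrank K V' = Module.finrank K V₁ := LinearMap.finrank_range_of_inj hgVinj
  have hd2 : Module.finrank K V₁ + Module.finrank K W = Module.finrank K V :=
    Submodule.finrank_add_eq_of_isCompl hW
  have hd3 : Module.finrank K V' + Module.finrank K U' = Module.finrank K V :=
    Submodule.finrank_add_eq_of_isCompl hU'
  have hd4 : Module.finrank K W = Module.finrank K U' := by omega
  set u' : W ≃ₗ[K] U' := LinearEquiv.ofFinrankEq _ _ hd4 with hu'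
  -- an iso from W to range fW and a projection
  set eW : W ≃ₗ[K] LinearMap.range fW := LinearEquiv.ofInjective fW hfWinj with heW
  obtain ⟨U'', hU''⟩ := Submodule.exists_isCompl (LinearMap.range fW)
  set π : V →ₗ[K] LinearMap.range fW :=
    (LinearMap.range fW).linearProjOfIsCompl U'' hU'' with hπ
  set h₀ : W →ₗ[K] V := U'.subtype.comp u'.toLinearMap - g.comp W.subtype with hh₀
  set β : V →ₗ[K] V := h₀.comp ((eW.symm : LinearMap.range fW →ₗ[K] W).comp π) with hβ
  have hβf : ∀ w : W, β (f ↑w) = ↑(u' w) - g ↑w := by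
    intro w
    have h1 : f ↑w = ↑(eW w) := rfl
    rw [hβ]
    simp only [LinearMap.comp_apply, h1]
    have h2 : π ↑(eW w) = eW w := Submodule.linearProjOfIsCompl_apply_left hU'' (eW w)
    rw [h2]
    have h3 : eW.symm (eW w) = w := eW.symm_apply_apply w
    rw [LinearEquiv.coe_coe, h3, hh₀]
    simp [LinearMap.sub_apply, LinearMap.comp_apply]
  -- g + β ∘ f is injective
  have hinj : Function.Injective (g + β.comp f) := by
    rw [← LinearMap.ker_eq_bot, Submodule.eq_bot_iff]
    intro x hx
    have hx0 : g x + β (f x) = 0 := hx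
    set xv := (V₁.linearProjOfIsCompl W hW) x with hxv
    set xw := (W.linearProjOfIsCompl V₁ hW.symm) x with hxw
    have hdecomp : (↑xv : V) + ↑xw = x :=
      Submodule.projection_add_projection_eq_self hW x
    have hfxv : f ↑xv = 0 := xv.property
    have hfx : f x = f ↑xw := by
      rw [← hdecomp]
      simp [map_add, hfxv]
    have hgx : g x = g ↑xv + g ↑xw := by
      rw [← hdecomp]; simp [map_add]
    rw [hgx, hfx, hβf xw] at hx0
    -- g xv + (g xw + (u' xw - g xw)) = 0  →  g xv + u' xw = 0
    have hx1 : g ↑xv + ↑(u' xw) = 0 := by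
      rw [← hx0]; ring
    -- g xv ∈ V', u' xw ∈ U'
    have hmem1 : g ↑xv ∈ V' := ⟨xv, rfl⟩
    have hmem2 : (↑(u' xw) : V) ∈ U' := (u' xw).property
    have hzero1 : g ↑xv = 0 ∧ (↑(u' xw) : V) = 0 := by
      constructor
      · have : g ↑xv = -(↑(u' xw) : V) := by linear_combination hx1
        have hm : g ↑xv ∈ V' ⊓ U' := ⟨hmem1, by rw [this]; exact neg_mem hmem2⟩
        rw [hU'.inf_eq_bot] at hm
        exact hm
      · have : (↑(u' xw) : V) = -(g ↑xv) := by linear_combination hx1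
        have hm : (↑(u' xw) : V) ∈ V' ⊓ U' := ⟨by rw [this]; exact neg_mem hmem1, hmem2⟩
        rw [hU'.inf_eq_bot] at hm
        exact hm
    have hxw0 : xw = 0 := by
      have h5 : u' xw = 0 := Subtype.ext hzero1.2
      exact (LinearEquiv.map_eq_zero_iff u').mp h5
    have hxv0 : (↑xv : V) = 0 := hker _ hfxv hzero1.1
    rw [← hdecomp, hxv0, hxw0]
    simp
  -- conclusion
  set B := LinearMap.toMatrix' β with hB
  refine ⟨B, ?_⟩
  rw [← Matrix.mulVec_injective_iff_isUnit]
  have hlin : (R + B * P).mulVecLin = g + β.comp f := by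
    rw [Matrix.mulVecLin_add, Matrix.mulVecLin_mul, hB]
    congr 1
    rw [← Matrix.toLin'_apply', Matrix.toLin'_toMatrix']
  intro x y hxy
  apply hinj
  have h6 : ∀ z, (R + B * P).mulVec z = (g + β.comp f) z := by
    intro z
    rw [← hlin, Matrix.mulVecLin_apply]
  rw [← h6, ← h6, hxy]

section blocks
variable {n : ℕ}

def Ub (A : Matrix (Fin n) (Fin n) K) : Matrix (Fin n ⊕ Fin n) (Fin n ⊕ Fin n) K :=
  Matrix.fromBlocks 1 A 0 1

def Lb (B : Matrix (Fin n) (Fin n) K) : Matrix (Fin n ⊕ Fin n) (Fin n ⊕ Fin n) K :=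
  Matrix.fromBlocks 1 0 B 1

lemma Umul (a b : Matrix (Fin n) (Fin n) K) : Ub a * Ub b = Ub (a + b) := by
  unfold Ub
  rw [Matrix.fromBlocks_multiply]
  simp [add_comm]

lemma Lmul (a b : Matrix (Fin n) (Fin n) K) : Lb a * Lb b = Lb (a + b) := by
  unfold Lb
  rw [Matrix.fromBlocks_multiply]
  simp [add_comm]

lemma Uzero : (Ub 0 : Matrix (Fin n ⊕ Fin n) (Fin n ⊕ Fin n) K) = 1 := by
  unfold Ub; exact Matrix.fromBlocks_one

lemma Lzero : (Lb 0 : Matrix (Fin n ⊕ Fin n) (Fin n ⊕ Fin n) K) = 1 := by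
  unfold Lb; exact Matrix.fromBlocks_one

lemma Udet (a : Matrix (Fin n) (Fin n) K) : (Ub a).det = 1 := by
  unfold Ub
  rw [Matrix.det_fromBlocks_zero₂₁]
  simp

lemma Ldet (a : Matrix (Fin n) (Fin n) K) : (Lb a).det = 1 := by
  unfold Lb
  rw [Matrix.det_fromBlocks_zero₁₂]
  simp

lemma Wform (M₀ M₀i : Matrix (Fin n) (Fin n) K) (h1 : M₀ * M₀i = 1) (h2 : M₀i * M₀ = 1) :
    Ub M₀ * Lb (-M₀i) * Ub M₀ = Matrix.fromBlocks 0 M₀ (-M₀i) 0 := by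
  unfold Ub Lb
  rw [Matrix.fromBlocks_multiply, Matrix.fromBlocks_multiply]
  simp [h1, h2, Matrix.neg_mul, Matrix.mul_neg]

lemma WWform (a b c d : Matrix (Fin n) (Fin n) K) :
    Matrix.fromBlocks 0 a c 0 * Matrix.fromBlocks 0 b d 0 =
      Matrix.fromBlocks (a * d) 0 0 (c * b) := by
  rw [Matrix.fromBlocks_multiply]
  simp

lemma gauss_step (P Q R1 S1 p q r s M Minv R1i : Matrix (Fin n) (Fin n) K)
    (hR1 : R1 * R1i = 1) (hR1' : R1i * R1 = 1)
    (hM : M * Minv = 1) (hM' : Minv * M = 1)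
    (hinv1 : Matrix.fromBlocks P Q R1 S1 * Matrix.fromBlocks p q r s = 1)
    (hinv2 : Matrix.fromBlocks p q r s * Matrix.fromBlocks P Q R1 S1 = 1)
    (hdet : (Matrix.fromBlocks P Q R1 S1).det = 1) :
    ∃ Q2 S2 : Matrix (Fin n) (Fin n) K,
      Matrix.fromBlocks P Q R1 S1 =
        Ub ((P - M) * R1i) * (Lb (R1 * Minv) * Matrix.fromBlocks M Q2 0 S2)
      ∧ S2 * (-(r * (M * R1i))) = 1
      ∧ (-(r * (M * R1i))) * S2 = 1
      ∧ M.det * S2.det = 1 := by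
  set A2 := (P - M) * R1i with hA2
  set B2 := R1 * Minv with hB2
  set Q2 := Q - A2 * S1 with hQ2
  set S2 := S1 - B2 * Q2 with hS2
  have hblk := hinv2
  rw [Matrix.fromBlocks_multiply, ← Matrix.fromBlocks_one, Matrix.fromBlocks_inj] at hblk
  obtain ⟨h11, h12, h21, h22⟩ := hblk
  have hA2R1 : A2 * R1 = P - M := by
    rw [hA2, Matrix.mul_assoc, hR1', Matrix.mul_one]
  have hB2M : B2 * M = R1 := by
    rw [hB2, Matrix.mul_assoc, hM', Matrix.mul_one]
  have hdecomp : Matrix.fromBlocks P Q R1 S1 =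
      Ub A2 * (Lb B2 * Matrix.fromBlocks M Q2 0 S2) := by
    unfold Ub Lb
    rw [Matrix.fromBlocks_multiply, Matrix.fromBlocks_multiply, Matrix.fromBlocks_inj]
    refine ⟨?_, ?_, ?_, ?_⟩
    · simp only [Matrix.one_mul, Matrix.zero_mul, Matrix.mul_zero, Matrix.mul_one,
        add_zero, zero_add]
      calc P = M + (P - M) := by noncomm_ring
        _ = M + A2 * R1 := by rw [hA2R1]
        _ = M + A2 * (B2 * M) := by rw [hB2M]
    · simp only [Matrix.one_mul, Matrix.zero_mul, Matrix.mul_zero, Matrix.mul_one,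
        add_zero, zero_add]
      calc Q = Q2 + A2 * S1 := by rw [hQ2]; noncomm_ring
        _ = Q2 + A2 * (B2 * Q2 + S2) := by rw [hS2]; noncomm_ring
    · simp only [Matrix.one_mul, Matrix.zero_mul, Matrix.mul_zero, Matrix.mul_one,
        add_zero, zero_add]
      exact hB2M.symm
    · simp only [Matrix.one_mul, Matrix.zero_mul, Matrix.mul_zero, Matrix.mul_one,
        add_zero, zero_add]
      rw [hS2]
      noncomm_ring
  have hE : r * A2 + s = -(r * (M * R1i)) := by
    have e1 : r * P = -(s * R1) := eq_neg_of_add_eq_zero_left h21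
    have e2 : r * A2 + s = (r * P) * R1i - r * (M * R1i) + s := by
      rw [hA2]
      noncomm_ring
    rw [e2, e1]
    have e3 : (-(s * R1)) * R1i = -s := by
      rw [Matrix.neg_mul, Matrix.mul_assoc, hR1, Matrix.mul_one]
    rw [e3]
    noncomm_ring
  have hgform : Lb (-B2) * (Ub (-A2) * Matrix.fromBlocks P Q R1 S1) =
      Matrix.fromBlocks M Q2 0 S2 := by
    rw [hdecomp, ← Matrix.mul_assoc (Ub (-A2)), Umul, neg_add_cancel, Uzero,
      Matrix.one_mul, ← Matrix.mul_assoc, Lmul, neg_add_cancel, Lzero, Matrix.one_mul]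
  have hg2inv : Matrix.fromBlocks M Q2 0 S2 *
      (Matrix.fromBlocks p q r s * (Ub A2 * Lb B2)) = 1 := by
    calc Matrix.fromBlocks M Q2 0 S2 * (Matrix.fromBlocks p q r s * (Ub A2 * Lb B2))
        = Lb (-B2) * (Ub (-A2) * (Matrix.fromBlocks P Q R1 S1 *
            (Matrix.fromBlocks p q r s * (Ub A2 * Lb B2)))) := by
          rw [← hgform]
          simp only [Matrix.mul_assoc]
      _ = Lb (-B2) * (Ub (-A2) * (Ub A2 * Lb B2)) := by
          rw [← Matrix.mul_assoc (Matrix.fromBlocks P Q R1 S1), hinv1, Matrix.one_mul]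
      _ = Lb (-B2) * Lb B2 := by
          rw [← Matrix.mul_assoc (Ub (-A2)), Umul, neg_add_cancel, Uzero, Matrix.one_mul]
      _ = 1 := by rw [Lmul, neg_add_cancel, Lzero]
  have hmid : Ub A2 * Lb B2 = Matrix.fromBlocks (1 + A2 * B2) A2 B2 1 := by
    unfold Ub Lb
    rw [Matrix.fromBlocks_multiply]
    simp
  rw [hmid, Matrix.fromBlocks_multiply, Matrix.fromBlocks_multiply,
    ← Matrix.fromBlocks_one, Matrix.fromBlocks_inj] at hg2inv
  obtain ⟨k11, k12, k21, k22⟩ := hg2inv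
  simp only [Matrix.zero_mul, Matrix.mul_one, zero_add, Matrix.mul_zero, add_zero] at k22
  -- k22 : S2 * (r * A2 + s) = 1
  have hS2E : S2 * (-(r * (M * R1i))) = 1 := by rw [← hE]; exact k22
  have hES2 : (-(r * (M * R1i))) * S2 = 1 := mul_eq_one_comm.mp hS2E
  have hdet2 : M.det * S2.det = 1 := by
    have hd := congrArg Matrix.det hdecomp
    rw [hdet, Matrix.det_mul, Matrix.det_mul, Udet, Ldet, one_mul, one_mul,
      Matrix.det_fromBlocks_zero₂₁] at hd
    exact hd.symm
  exact ⟨Q2, S2, hdecomp, hS2E, hES2, hdet2⟩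

end blocks
theorem sl2n_eq_prod_of_thirteen_block_unipotents :
    ∀ (K : Type) [Field K] [IsAlgClosed K] (n : ℕ), 1 ≤ n →
    ∀ g : Matrix (Fin n ⊕ Fin n) (Fin n ⊕ Fin n) K, g.det = 1 →
    ∃ A : Fin 7 → Matrix (Fin n) (Fin n) K, ∃ B : Fin 6 → Matrix (Fin n) (Fin n) K,
      g = Matrix.fromBlocks 1 (A 0) 0 1 * Matrix.fromBlocks 1 0 (B 0) 1 *
          Matrix.fromBlocks 1 (A 1) 0 1 * Matrix.fromBlocks 1 0 (B 1) 1 *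
          Matrix.fromBlocks 1 (A 2) 0 1 * Matrix.fromBlocks 1 0 (B 2) 1 *
          Matrix.fromBlocks 1 (A 3) 0 1 * Matrix.fromBlocks 1 0 (B 3) 1 *
          Matrix.fromBlocks 1 (A 4) 0 1 * Matrix.fromBlocks 1 0 (B 4) 1 *
          Matrix.fromBlocks 1 (A 5) 0 1 * Matrix.fromBlocks 1 0 (B 5) 1 *
          Matrix.fromBlocks 1 (A 6) 0 1 := by
  intro K _ _ n _hn g hdet
  classical
  have hgu : IsUnit g := (Matrix.isUnit_iff_isUnit_det g).mpr (by rw [hdet]; exact isUnit_one)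
  obtain ⟨gi, hggi, hgig⟩ := exists_inverse_of_isUnit hgu
  set P := g.toBlocks₁₁ with hP
  set Q := g.toBlocks₁₂ with hQ
  set R₀ := g.toBlocks₂₁ with hR₀
  set S₀ := g.toBlocks₂₂ with hS₀
  have hg : g = Matrix.fromBlocks P Q R₀ S₀ := (Matrix.fromBlocks_toBlocks g).symm
  have hker : ∀ x : Fin n → K, P *ᵥ x = 0 → R₀ *ᵥ x = 0 → x = 0 := by
    intro x h1 h2
    have hx : g *ᵥ (Sum.elim x 0) = 0 := by
      rw [hg, Matrix.fromBlocks_mulVec]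
      simp only [Sum.elim_comp_inl, Sum.elim_comp_inr]
      rw [h1, h2]
      simp
    have h3 : Sum.elim x (0 : Fin n → K) = 0 := by
      have h4 : gi *ᵥ (g *ᵥ (Sum.elim x 0)) = gi *ᵥ 0 := by rw [hx]
      rwa [Matrix.mulVec_mulVec, hgig, Matrix.one_mulVec, Matrix.mulVec_zero] at h4
    funext i
    exact congrFun h3 (Sum.inl i)
  obtain ⟨B₀, hB₀⟩ := exists_B_unit P R₀ hker
  set R1 := R₀ + B₀ * P with hR1def
  obtain ⟨R1i, hR1a, hR1b⟩ := exists_inverse_of_isUnit hB₀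
  set S1 := B₀ * Q + S₀ with hS1def
  set g1 := Lb B₀ * g with hg1def
  have hg1blocks : g1 = Matrix.fromBlocks P Q R1 S1 := by
    rw [hg1def, hg, Lb, Matrix.fromBlocks_multiply, Matrix.fromBlocks_inj]
    refine ⟨by simp, by simp, ?_, by simp [hS1def]⟩
    simp only [Matrix.one_mul]
    rw [hR1def, add_comm]
  have hdet1 : g1.det = 1 := by
    rw [hg1def, Matrix.det_mul, Ldet, one_mul, hdet]
  have hg1u : IsUnit g1 := (Matrix.isUnit_iff_isUnit_det g1).mpr (by rw [hdet1]; exact isUnit_one)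
  obtain ⟨hm, hgh, hhg⟩ := exists_inverse_of_isUnit hg1u
  set p := hm.toBlocks₁₁
  set q := hm.toBlocks₁₂
  set r := hm.toBlocks₂₁
  set s := hm.toBlocks₂₂
  have hh : hm = Matrix.fromBlocks p q r s := (Matrix.fromBlocks_toBlocks hm).symm
  have hinv1 : Matrix.fromBlocks P Q R1 S1 * Matrix.fromBlocks p q r s = 1 := by
    rw [← hg1blocks, ← hh]; exact hgh
  have hinv2 : Matrix.fromBlocks p q r s * Matrix.fromBlocks P Q R1 S1 = 1 := by
    rw [← hg1blocks, ← hh]; exact hhg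
  have hdetblocks : (Matrix.fromBlocks P Q R1 S1).det = 1 := by
    rw [← hg1blocks]; exact hdet1
  -- first application with M := R1, to get the determinant of -r
  obtain ⟨Q2₀, S2₀, _, hS2₀a, hS2₀b, hdet₀⟩ :=
    gauss_step P Q R1 S1 p q r s R1 R1i R1i hR1a hR1b hR1a hR1b hinv1 hinv2 hdetblocks
  have hrR1 : -(r * (R1 * R1i)) = -r := by rw [hR1a, Matrix.mul_one]
  rw [hrR1] at hS2₀a hS2₀b
  have hdetreq : (-r).det = R1.det := by
    have e1 : (-r).det * S2₀.det = 1 := by rw [← Matrix.det_mul, hS2₀b, Matrix.det_one]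
    calc (-r).det = (-r).det * (R1.det * S2₀.det) := by rw [hdet₀, mul_one]
      _ = R1.det * ((-r).det * S2₀.det) := by ring
      _ = R1.det := by rw [e1, mul_one]
  have hXdet : (-(r * R1i)).det = 1 := by
    have e2 : -(r * R1i) = (-r) * R1i := by noncomm_ring
    rw [e2, Matrix.det_mul, hdetreq, ← Matrix.det_mul, hR1a, Matrix.det_one]
  obtain ⟨Y, Yi, G', Gi', hYYi, hYiY, hGGi, hGiG, hXY⟩ := lemE (-(r * R1i)) hXdet
  -- helper rewriting lemmas
  have hmidR1 : ∀ Z : Matrix (Fin n) (Fin n) K, R1 * (R1i * Z) = Z := fun Z => by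
    rw [← Matrix.mul_assoc, hR1a, Matrix.one_mul]
  have hmidR1i : ∀ Z : Matrix (Fin n) (Fin n) K, R1i * (R1 * Z) = Z := fun Z => by
    rw [← Matrix.mul_assoc, hR1b, Matrix.one_mul]
  have hmidY : ∀ Z : Matrix (Fin n) (Fin n) K, Y * (Yi * Z) = Z := fun Z => by
    rw [← Matrix.mul_assoc, hYYi, Matrix.one_mul]
  have hmidYi : ∀ Z : Matrix (Fin n) (Fin n) K, Yi * (Y * Z) = Z := fun Z => by
    rw [← Matrix.mul_assoc, hYiY, Matrix.one_mul]
  have hmidG : ∀ Z : Matrix (Fin n) (Fin n) K, G' * (Gi' * Z) = Z := fun Z => by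
    rw [← Matrix.mul_assoc, hGGi, Matrix.one_mul]
  have hmidGi : ∀ Z : Matrix (Fin n) (Fin n) K, Gi' * (G' * Z) = Z := fun Z => by
    rw [← Matrix.mul_assoc, hGiG, Matrix.one_mul]
  set M := R1i * (Y * R1) with hMdef
  set Minv := R1i * (Yi * R1) with hMinvdef
  have hMa : M * Minv = 1 := by
    rw [hMdef, hMinvdef]
    simp only [Matrix.mul_assoc]
    rw [hmidR1, hmidY, hR1b]
  have hMb : Minv * M = 1 := by
    rw [hMdef, hMinvdef]
    simp only [Matrix.mul_assoc]
    rw [hmidR1, hmidYi, hR1b]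
  obtain ⟨Q2, S2, hdecomp, hS2a, hS2b, hdet2⟩ :=
    gauss_step P Q R1 S1 p q r s M Minv R1i hR1a hR1b hMa hMb hinv1 hinv2 hdetblocks
  have hMR1i : M * R1i = R1i * Y := by
    rw [hMdef]
    simp only [Matrix.mul_assoc]
    rw [hR1a, Matrix.mul_one]
  have hEform : -(r * (M * R1i)) = G' * Y * Gi' := by
    rw [hMR1i]
    have e3 : -(r * (R1i * Y)) = (-(r * R1i)) * Y := by noncomm_ring
    rw [e3, hXY]
  have hinvE : (G' * Y * Gi') * (G' * (Yi * Gi')) = 1 := by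
    simp only [Matrix.mul_assoc]
    rw [hmidGi, hmidY, hGGi]
  have hS2E : S2 * (G' * Y * Gi') = 1 := by rw [← hEform]; exact hS2a
  have hS2eq : S2 = G' * (Yi * Gi') := by
    calc S2 = S2 * ((G' * Y * Gi') * (G' * (Yi * Gi'))) := by rw [hinvE, Matrix.mul_one]
      _ = (S2 * (G' * Y * Gi')) * (G' * (Yi * Gi')) := by simp only [Matrix.mul_assoc]
      _ = G' * (Yi * Gi') := by rw [hS2E, Matrix.one_mul]
  set Gg := G' * R1 with hGgdef
  set Ggi := R1i * Gi' with hGgidef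
  have hGgGgi : Gg * Ggi = 1 := by
    rw [hGgdef, hGgidef]
    simp only [Matrix.mul_assoc]
    rw [hmidR1, hGGi]
  have hGgiGg : Ggi * Gg = 1 := by
    rw [hGgidef, hGgdef]
    simp only [Matrix.mul_assoc]
    rw [hmidGi, hR1b]
  have hmidGg : ∀ Z : Matrix (Fin n) (Fin n) K, Gg * (Ggi * Z) = Z := fun Z => by
    rw [← Matrix.mul_assoc, hGgGgi, Matrix.one_mul]
  have hmidGgi : ∀ Z : Matrix (Fin n) (Fin n) K, Ggi * (Gg * Z) = Z := fun Z => by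
    rw [← Matrix.mul_assoc, hGgiGg, Matrix.one_mul]
  have hmidM : ∀ Z : Matrix (Fin n) (Fin n) K, M * (Minv * Z) = Z := fun Z => by
    rw [← Matrix.mul_assoc, hMa, Matrix.one_mul]
  have hmidMi : ∀ Z : Matrix (Fin n) (Fin n) K, Minv * (M * Z) = Z := fun Z => by
    rw [← Matrix.mul_assoc, hMb, Matrix.one_mul]
  have hS2form : Gg * (Minv * Ggi) = S2 := by
    rw [hS2eq, hGgdef, hMinvdef, hGgidef]
    simp only [Matrix.mul_assoc]
    rw [hmidR1, hmidR1]
  set N := -(Minv * Ggi) with hNdef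
  set Ninv := -(Gg * M) with hNinvdef
  have hNa : N * Ninv = 1 := by
    rw [hNdef, hNinvdef, neg_mul_neg]
    simp only [Matrix.mul_assoc]
    rw [hmidGgi, hMb]
  have hNb : Ninv * N = 1 := by
    rw [hNdef, hNinvdef, neg_mul_neg]
    simp only [Matrix.mul_assoc]
    rw [hmidM, hGgGgi]
  have hW1 : Ub Ggi * Lb (-Gg) * Ub Ggi = Matrix.fromBlocks 0 Ggi (-Gg) 0 :=
    Wform Ggi Gg hGgiGg hGgGgi
  have hW2 : Ub N * Lb (-Ninv) * Ub N = Matrix.fromBlocks 0 N (-Ninv) 0 :=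
    Wform N Ninv hNa hNb
  have hWW : Matrix.fromBlocks 0 Ggi (-Gg) 0 * Matrix.fromBlocks 0 N (-Ninv) 0 =
      Matrix.fromBlocks M 0 0 S2 := by
    rw [WWform, Matrix.fromBlocks_inj]
    refine ⟨?_, rfl, rfl, ?_⟩
    · rw [hNinvdef, neg_neg, hmidGgi]
    · rw [hNdef, neg_mul_neg, hS2form]
  have hdiagU : Matrix.fromBlocks M Q2 0 S2 =
      Matrix.fromBlocks M 0 0 S2 * Ub (Minv * Q2) := by
    rw [Ub, Matrix.fromBlocks_multiply, Matrix.fromBlocks_inj]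
    refine ⟨by simp, ?_, by simp, by simp⟩
    simp only [Matrix.mul_one, Matrix.zero_mul, add_zero, Matrix.mul_zero, zero_add]
    rw [hmidM]
  refine ⟨![0, 0, 0, (P - M) * R1i, Ggi, Ggi + N, N + Minv * Q2],
         ![0, 0, -B₀, R1 * Minv, -Gg, -Ninv], ?_⟩
  show g =
    Ub 0 * Lb 0 * Ub 0 * Lb 0 * Ub 0 * Lb (-B₀) * Ub ((P - M) * R1i) * Lb (R1 * Minv) *
    Ub Ggi * Lb (-Gg) * Ub (Ggi + N) * Lb (-Ninv) * Ub (N + Minv * Q2)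
  rw [Uzero, Lzero]
  simp only [Matrix.one_mul]
  rw [← Umul Ggi N, ← Umul N (Minv * Q2)]
  have hgrec : g = Lb (-B₀) * Matrix.fromBlocks P Q R1 S1 := by
    rw [← hg1blocks, hg1def, ← Matrix.mul_assoc, Lmul, neg_add_cancel, Lzero, Matrix.one_mul]
  rw [hgrec, hdecomp, hdiagU, ← hWW, ← hW1, ← hW2]
  simp only [Matrix.mul_assoc]
end
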